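/- For integers n ≥ 1 define ψ_n(p) = 2^{1−n} ∑_{k=0}^n C(n,k) (k/n)^{1/p} − 2^{1/p} for p ≥ 1, and let ψ(p) = 2^{1−1/p} − 2^{1/p}. Then: (1) for every p ≥ 1, ψ_n(p) → ψ(p) as n → ∞; (2) for every p > 1 and every positive integer n, ψ_n(p) < ψ_{n+1}(p); (3) for each n, ψ_n is strictly increasing on [1, ∞); (4) for every positive integer n, lim_{p → ∞} ψ_n(p) = 1 − 2^{1−n}. -/

import Mathlib

/-- `ψ_n(p) = 2^{1−n} ∑_{k=0}^n C(n,k) (k/n)^{1/p} − 2^{1/p}`. -/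
noncomputable def psiN (n : ℕ) (p : ℝ) : ℝ :=
  (2 : ℝ) ^ ((1 : ℝ) - (n : ℝ)) *
      ∑ k ∈ Finset.range (n + 1), (n.choose k : ℝ) * ((k : ℝ) / (n : ℝ)) ^ (1 / p)
    - (2 : ℝ) ^ (1 / p)

/-- `ψ(p) = 2^{1−1/p} − 2^{1/p}`. -/
noncomputable def psiInf (p : ℝ) : ℝ :=
  (2 : ℝ) ^ (1 - 1 / p) - (2 : ℝ) ^ (1 / p)

open unitInterval

section Aux

/-- Strict concavity inequality for the key Bernstein comparison:
for `i < n`, `C(n,i) f(i/n) + C(n,i+1) f((i+1)/n) < C(n+1,i+1) f((i+1)/(n+1))`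
where `f t = t^c`, `0 < c < 1`. -/
lemma psi_key_strict {c : ℝ} (hc0 : 0 < c) (hc1 : c < 1) {n i : ℕ} (hi : i < n) :
    (n.choose i : ℝ) * ((i : ℝ) / n) ^ c
      + (n.choose (i+1) : ℝ) * (((i:ℝ)+1) / n) ^ c
      < ((n+1).choose (i+1) : ℝ) * (((i:ℝ)+1) / ((n:ℝ)+1)) ^ c := by
  have hconc := Real.strictConcaveOn_rpow hc0 hc1
  have hn0 : (0:ℝ) < n := by exact_mod_cast Nat.zero_lt_of_lt hi
  set A : ℝ := (n.choose i : ℝ) with hA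
  set B : ℝ := (n.choose (i+1) : ℝ) with hB
  set P : ℝ := ((n+1).choose (i+1) : ℝ) with hP
  have hApos : 0 < A := by
    rw [hA]; exact_mod_cast Nat.choose_pos (le_of_lt hi)
  have hBpos : 0 < B := by
    rw [hB]; exact_mod_cast Nat.choose_pos hi
  have hPascal : P = A + B := by
    rw [hP, hA, hB]
    have : (n+1).choose (i+1) = n.choose i + n.choose (i+1) := Nat.choose_succ_succ n i
    exact_mod_cast congrArg (Nat.cast : ℕ → ℝ) this
  have hPpos : 0 < P := by rw [hPascal]; linarith
  have hsucc : ((n:ℝ)+1) * A = P * ((i:ℝ)+1) := by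
    have := Nat.add_one_mul_choose_eq n i
    have h2 : ((n+1) * n.choose i : ℕ) = ((n+1).choose (i+1) * (i+1) : ℕ) := this
    rw [hP, hA]
    exact_mod_cast congrArg (Nat.cast : ℕ → ℝ) h2
  have hxy : (i : ℝ) / n ≠ ((i:ℝ)+1) / n := by
    intro h
    rw [div_eq_div_iff (by positivity) (by positivity)] at h
    nlinarith
  have ha : 0 < A / P := div_pos hApos hPpos
  have hb : 0 < B / P := div_pos hBpos hPpos
  have hab : A / P + B / P = 1 := by rw [← add_div, ← hPascal, div_self hPpos.ne']
  have hcomb : (A/P) • ((i : ℝ) / n) + (B/P) • (((i:ℝ)+1) / n) = ((i:ℝ)+1) / ((n:ℝ)+1) := by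
    simp only [smul_eq_mul]
    field_simp
    linear_combination (-((i:ℝ)+1)*((n:ℝ)+1))*hPascal - hsucc
  have hi0 : (0:ℝ) ≤ (i:ℝ)/n := by positivity
  have hi1 : (0:ℝ) ≤ ((i:ℝ)+1)/n := by positivity
  have hmain := hconc.2 hi0 hi1 hxy ha hb hab
  rw [hcomb] at hmain
  simp only [smul_eq_mul] at hmain
  have hfin := mul_lt_mul_of_pos_left hmain hPpos
  calc A * ((i : ℝ) / n) ^ c + B * (((i:ℝ)+1) / n) ^ c
      = P * (A/P * ((i:ℝ)/n)^c + B/P * (((i:ℝ)+1)/n)^c) := by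
        field_simp
        try ring
    _ < P * (((i:ℝ)+1) / ((n:ℝ)+1)) ^ c := hfin

lemma psi_part1 (p : ℝ) (hp : 1 ≤ p) :
    Filter.Tendsto (fun n : ℕ => psiN n p) Filter.atTop
      (nhds ((2 : ℝ) ^ (1 - 1/p) - (2 : ℝ) ^ (1/p))) := by
  have hp0 : 0 < p := lt_of_lt_of_le one_pos hp
  set c : ℝ := 1 / p with hc
  have hc0 : 0 < c := by positivity
  set F : C(I, ℝ) := ⟨fun x => (x : ℝ) ^ c,
    (Real.continuous_rpow_const hc0.le).comp continuous_subtype_val⟩ with hF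
  have huniform := bernsteinApproximation_uniform F
  set x₀ : I := ⟨1/2, by constructor <;> norm_num⟩ with hx₀
  have hpt : Filter.Tendsto (fun n : ℕ => bernsteinApproximation n F x₀) Filter.atTop
      (nhds (F x₀)) :=
    ((continuous_eval_const x₀).tendsto F).comp huniform
  have hev : ∀ n : ℕ, psiN n p = 2 * bernsteinApproximation n F x₀ - (2:ℝ) ^ c := by
    intro n
    have happ : bernsteinApproximation n F x₀
        = ∑ k : Fin (n+1), F (bernstein.z k) * bernstein n k x₀ := by
      simp [bernsteinApproximation, ContinuousMap.sum_apply]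
      exact Finset.sum_congr rfl fun k _ => mul_comm _ _
    have hbern : ∀ k : Fin (n+1), bernstein n k x₀ = (n.choose k : ℝ) * (1/2)^n := by
      intro k
      rw [bernstein_apply]
      have hk : (k : ℕ) ≤ n := Nat.lt_succ_iff.mp k.is_lt
      have : ((x₀ : ℝ)) = 1/2 := rfl
      rw [this]
      norm_num
      rw [mul_assoc, ← pow_add]
      congr 2
      omega
    have hFz : ∀ k : Fin (n+1), F (bernstein.z k) = (((k:ℕ) : ℝ) / (n : ℝ)) ^ c := by
      intro k
      simp [hF, bernstein.z]
    rw [happ]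
    have : ∑ k : Fin (n+1), F (bernstein.z k) * bernstein n k x₀
        = ∑ k ∈ Finset.range (n+1), (((k : ℝ) / (n : ℝ)) ^ c) * ((n.choose k : ℝ) * (1/2)^n) := by
      rw [Finset.sum_range fun k => (((k : ℝ) / (n : ℝ)) ^ c) * ((n.choose k : ℝ) * (1/2)^n)]
      exact Finset.sum_congr rfl fun k _ => by rw [hFz k, hbern k]
    rw [this]
    unfold psiN
    rw [← hc]
    have h2n : (2:ℝ) ^ ((1:ℝ) - (n:ℝ)) = 2 * (1/2:ℝ)^n := by
      rw [show (1:ℝ)-(n:ℝ) = 1 + (-(n:ℝ)) by ring, Real.rpow_add two_pos, Real.rpow_one,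
        ← Real.rpow_natCast (1/2 : ℝ) n, one_div, Real.inv_rpow (by norm_num : (0:ℝ) ≤ 2),
        ← Real.rpow_neg (by norm_num : (0:ℝ) ≤ 2)]
    rw [h2n, Finset.mul_sum, Finset.mul_sum]
    congr 1
    apply Finset.sum_congr rfl
    intro k _
    ring
  have hFx₀ : F x₀ = (1/2 : ℝ) ^ c := rfl
  have hfin := (hpt.const_mul (2:ℝ)).sub (tendsto_const_nhds (x := (2:ℝ)^c))
  have hlim : 2 * F x₀ - (2:ℝ)^c = (2 : ℝ) ^ (1 - c) - (2 : ℝ) ^ c := by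
    rw [hFx₀]
    have : (1/2 : ℝ) ^ c = (2:ℝ) ^ (-c) := by
      rw [one_div, Real.inv_rpow (by norm_num : (0:ℝ) ≤ 2),
        ← Real.rpow_neg (by norm_num : (0:ℝ) ≤ 2)]
    rw [this, show (1:ℝ) - c = 1 + (-c) by ring, Real.rpow_add two_pos, Real.rpow_one]
  rw [hlim] at hfin
  apply Filter.Tendsto.congr _ hfin
  intro n
  exact (hev n).symm

lemma psi_part2 (p : ℝ) (hp : 1 < p) (n : ℕ) (hn : 1 ≤ n) : psiN n p < psiN (n + 1) p := by
  have hp0 : 0 < p := lt_trans one_pos hp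
  set c : ℝ := 1 / p with hc
  have hc0 : 0 < c := by positivity
  have hc1 : c < 1 := by rw [hc, div_lt_one hp0]; exact hp
  have hn0 : (0:ℝ) < (n:ℝ) := by exact_mod_cast hn
  set g : ℕ → ℝ := fun j => (n.choose j : ℝ) * ((j:ℝ)/(n:ℝ))^c with hg
  set f : ℕ → ℝ := fun j => ((n+1).choose j : ℝ) * ((j:ℝ)/((n:ℝ)+1))^c with hf
  have hg0 : g 0 = 0 := by simp [hg, Real.zero_rpow hc0.ne']
  have hgtop : g (n+1) = 0 := by simp [hg, Nat.choose_succ_self]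
  have hf0 : f 0 = 0 := by simp [hf, Real.zero_rpow hc0.ne']
  have hL : ∀ i ∈ Finset.range (n+1), g i + g (i+1) ≤ f (i+1) := by
    intro i hi
    have hi' : i ≤ n := Nat.lt_succ_iff.mp (Finset.mem_range.mp hi)
    rcases lt_or_eq_of_le hi' with h | rfl
    · have := psi_key_strict hc0 hc1 h
      simp only [hg, hf]
      push_cast
      linarith
    · simp only [hg, hf, Nat.choose_succ_self, Nat.cast_zero, zero_mul, add_zero,
        Nat.choose_self]
      push_cast
      rw [div_self hn0.ne', div_self (by linarith : (i:ℝ)+1 ≠ 0)]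
  have hLs : g 0 + g 1 < f 1 := by
    have := psi_key_strict hc0 hc1 (show 0 < n from hn)
    simp only [hg, hf]
    push_cast
    simpa using this
  have hsum : ∑ i ∈ Finset.range (n+1), (g i + g (i+1)) < ∑ i ∈ Finset.range (n+1), f (i+1) := by
    apply Finset.sum_lt_sum hL
    exact ⟨0, Finset.mem_range.mpr (Nat.succ_pos n), by simpa using hLs⟩
  have e1 : ∑ i ∈ Finset.range (n+1), f (i+1) = ∑ j ∈ Finset.range (n+2), f j := by
    rw [Finset.sum_range_succ' f (n+1), hf0, add_zero]
  have e2 : ∑ i ∈ Finset.range (n+1), (g i + g (i+1)) = 2 * ∑ j ∈ Finset.range (n+1), g j := by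
    rw [Finset.sum_add_distrib]
    have : ∑ i ∈ Finset.range (n+1), g (i+1) = ∑ j ∈ Finset.range (n+1), g j := by
      have h1 := Finset.sum_range_succ' g (n+1)
      have h2 := Finset.sum_range_succ g (n+1)
      rw [hg0, add_zero] at h1
      rw [hgtop, add_zero] at h2
      rw [← h1, h2]
    rw [this]; ring
  have hmain : 2 * ∑ j ∈ Finset.range (n+1), g j < ∑ j ∈ Finset.range (n+2), f j := by
    rw [← e1, ← e2]; exact hsum
  have ha : (2:ℝ)^((1:ℝ)-(n:ℝ)) = 2 * (2:ℝ)^(-(n:ℝ)) := by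
    rw [show (1:ℝ)-(n:ℝ) = 1 + (-(n:ℝ)) by ring, Real.rpow_add two_pos, Real.rpow_one]
  have hb : (2:ℝ)^((1:ℝ)-(((n+1):ℕ):ℝ)) = (2:ℝ)^(-(n:ℝ)) := by
    congr 1; push_cast; ring
  have hpos : (0:ℝ) < (2:ℝ)^(-(n:ℝ)) := Real.rpow_pos_of_pos two_pos _
  have hsumeq : ∑ k ∈ Finset.range ((n+1) + 1), ((n+1).choose k : ℝ) * ((k : ℝ) / ((n+1:ℕ) : ℝ)) ^ c
      = ∑ j ∈ Finset.range (n+2), f j := by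
    apply Finset.sum_congr rfl
    intro k hk
    simp only [hf]
    push_cast
    ring_nf
  unfold psiN
  rw [← hc]
  rw [ha, hb, hsumeq]
  have : (∑ k ∈ Finset.range (n + 1), (n.choose k : ℝ) * ((k : ℝ) / (n : ℝ)) ^ c)
      = ∑ j ∈ Finset.range (n+1), g j := rfl
  rw [this]
  nlinarith [hmain, hpos]

lemma psi_part3 (n : ℕ) (hn : 1 ≤ n) : StrictMonoOn (psiN n) (Set.Ici (1 : ℝ)) := by
  intro p hp q hq hpq
  simp only [Set.mem_Ici] at hp hq
  have hp0 : 0 < p := lt_of_lt_of_le one_pos hp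
  have hq0 : 0 < q := lt_of_lt_of_le one_pos hq
  have hinv : 1 / q < 1 / p := by
    apply one_div_lt_one_div_of_lt hp0 hpq
  have hsum : ∑ k ∈ Finset.range (n + 1), (n.choose k : ℝ) * ((k : ℝ) / (n : ℝ)) ^ (1 / p)
      ≤ ∑ k ∈ Finset.range (n + 1), (n.choose k : ℝ) * ((k : ℝ) / (n : ℝ)) ^ (1 / q) := by
    apply Finset.sum_le_sum
    intro k hk
    have hk' : k ≤ n := Nat.lt_succ_iff.mp (Finset.mem_range.mp hk)
    have hb0 : (0:ℝ) ≤ (k : ℝ) / (n : ℝ) := by positivity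
    have hb1 : (k : ℝ) / (n : ℝ) ≤ 1 := by
      apply div_le_one_of_le₀ (by exact_mod_cast hk') (by positivity)
    have := Real.rpow_le_rpow_of_exponent_ge' hb0 hb1 (by positivity) hinv.le
    exact mul_le_mul_of_nonneg_left this (by positivity)
  have h2 : (2:ℝ) ^ (1 / q) < (2:ℝ) ^ (1 / p) :=
    Real.rpow_lt_rpow_of_exponent_lt one_lt_two hinv
  have hA : (0:ℝ) < (2 : ℝ) ^ ((1 : ℝ) - (n : ℝ)) := Real.rpow_pos_of_pos two_pos _
  have := mul_le_mul_of_nonneg_left hsum hA.le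
  unfold psiN
  linarith

lemma psi_part4 (n : ℕ) (hn : 1 ≤ n) :
    Filter.Tendsto (fun p : ℝ => psiN n p) Filter.atTop
      (nhds (1 - (2 : ℝ) ^ ((1 : ℝ) - (n : ℝ)))) := by
  have hinv : Filter.Tendsto (fun p : ℝ => 1 / p) Filter.atTop (nhds 0) := by
    simpa using tendsto_inv_atTop_zero
  have h2 : Filter.Tendsto (fun p : ℝ => (2:ℝ) ^ (1 / p)) Filter.atTop (nhds 1) := by
    have := (Real.continuousAt_const_rpow (a := (2:ℝ)) (b := 0) two_ne_zero).tendsto.comp hinv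
    simpa [Function.comp_def] using this
  set c : ℕ → ℝ := fun k => if k = 0 then 0 else (n.choose k : ℝ) with hc
  have hterm : ∀ k ∈ Finset.range (n + 1),
      Filter.Tendsto (fun p : ℝ => (n.choose k : ℝ) * ((k : ℝ) / (n : ℝ)) ^ (1 / p))
        Filter.atTop (nhds (c k)) := by
    intro k hk
    rcases Nat.eq_zero_or_pos k with rfl | hkpos
    · have : ∀ᶠ p : ℝ in Filter.atTop,
          (n.choose 0 : ℝ) * (((0:ℕ) : ℝ) / (n : ℝ)) ^ (1 / p) = 0 := by
        filter_upwards [Filter.eventually_ge_atTop (1:ℝ)] with p hp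
        rw [Nat.cast_zero, zero_div, Real.zero_rpow (by positivity), mul_zero]
      simp only [hc, if_pos rfl]
      exact Filter.Tendsto.congr' (this.mono fun p hp => hp.symm) tendsto_const_nhds
    · have hb : (0:ℝ) < (k : ℝ) / (n : ℝ) := by
        apply div_pos (by exact_mod_cast hkpos) (by exact_mod_cast hn)
      have := (Real.continuousAt_const_rpow (a := ((k:ℝ)/(n:ℝ))) (b := 0) hb.ne').tendsto.comp hinv
      simp only [Function.comp, Real.rpow_zero] at this
      have h2 := this.const_mul (n.choose k : ℝ)
      simp only [mul_one] at h2
      simp only [hc, if_neg hkpos.ne']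
      exact h2
  have hsum := Filter.Tendsto.const_mul ((2:ℝ) ^ ((1:ℝ) - (n:ℝ)))
    (tendsto_finset_sum _ hterm)
  have hcsum : ∑ k ∈ Finset.range (n + 1), c k = 2 ^ n - 1 := by
    have : ∀ k ∈ Finset.range (n + 1), c k = (n.choose k : ℝ) - if k = 0 then 1 else 0 := by
      intro k hk
      rcases Nat.eq_zero_or_pos k with rfl | hkpos
      · simp [hc]
      · simp [hc, hkpos.ne']
    rw [Finset.sum_congr rfl this, Finset.sum_sub_distrib, Finset.sum_ite_eq' _ 0 (fun _ => (1:ℝ))]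
    have : ∑ k ∈ Finset.range (n + 1), (n.choose k : ℝ) = 2 ^ n := by
      exact_mod_cast congrArg (Nat.cast : ℕ → ℝ) (Nat.sum_range_choose n)
    simp [this]
  have hfin := hsum.sub h2
  have key : (2:ℝ) ^ ((1:ℝ) - (n:ℝ)) * (∑ k ∈ Finset.range (n + 1), c k) - 1
      = 1 - (2 : ℝ) ^ ((1 : ℝ) - (n : ℝ)) := by
    rw [hcsum, mul_sub, mul_one]
    have : (2:ℝ) ^ ((1:ℝ) - (n:ℝ)) * 2 ^ n = 2 := by
      rw [← Real.rpow_natCast 2 n, ← Real.rpow_add two_pos]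
      norm_num
    rw [this]; ring
  rw [key] at hfin
  exact hfin

end Aux

theorem stmt6 :
    (∀ p : ℝ, 1 ≤ p →
      Filter.Tendsto (fun n : ℕ => psiN n p) Filter.atTop (nhds (psiInf p))) ∧
    (∀ p : ℝ, 1 < p → ∀ n : ℕ, 1 ≤ n → psiN n p < psiN (n + 1) p) ∧
    (∀ n : ℕ, 1 ≤ n → StrictMonoOn (psiN n) (Set.Ici (1 : ℝ))) ∧
    (∀ n : ℕ, 1 ≤ n →
      Filter.Tendsto (fun p : ℝ => psiN n p) Filter.atTop
        (nhds (1 - (2 : ℝ) ^ ((1 : ℝ) - (n : ℝ))))) := by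
  refine ⟨fun p hp => ?_, psi_part2, psi_part3, psi_part4⟩
  have := psi_part1 p hp
  simpa [psiInf] using this
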